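/- Let p > 0 and f : [0,1] → ℝ be continuous. Suppose that for each sufficiently small ε > 0, x^ε : [0,1] → ℝ is a twice continuously differentiable function satisfying ẍ^ε(t) = ε²·(p·x^ε(t) + f(t)) for all t ∈ [0,1] with Neumann boundary conditions ẋ^ε(0) = ẋ^ε(1) = 0. Then sup_{0≤t≤1} |x^ε(t) + (1/p)·∫₀¹ f(s) ds| → 0 as ε → 0⁺. -/

import Mathlib

open Filter Set MeasureTheory

open intervalIntegral in

lemma ftc_icc (g g' : ℝ → ℝ) (a b : ℝ) (hab : 0 ≤ a) (hab2 : a ≤ b) (hb : b ≤ 1)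
    (hcont : ContinuousOn g (Icc (0:ℝ) 1))
    (hd : ∀ t ∈ Icc (0:ℝ) 1, HasDerivWithinAt g (g' t) (Icc (0:ℝ) 1) t)
    (hc' : ContinuousOn g' (Icc (0:ℝ) 1)) :
    ∫ s in a..b, g' s = g b - g a := by
  apply integral_eq_sub_of_hasDeriv_right_of_le hab2
    (hcont.mono (Icc_subset_Icc hab hb))
  · intro s hs
    have hs1 : s ∈ Icc (0:ℝ) 1 := ⟨hab.trans hs.1.le, hs.2.le.trans hb⟩
    refine (hd s hs1).mono_of_mem_nhdsWithin ?_
    refine mem_of_superset (Ioc_mem_nhdsGT_of_mem ⟨le_refl s, lt_of_lt_of_le hs.2 hb⟩) ?_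
    exact fun y hy => ⟨hs1.1.trans hy.1.le, hy.2⟩
  · have : ContinuousOn g' (uIcc a b) := by
      rw [uIcc_of_le hab2]; exact hc'.mono (Icc_subset_Icc hab hb)
    exact this.intervalIntegrable

lemma key (p : ℝ) (hp : 0 < p) (f : ℝ → ℝ) (hf : ContinuousOn f (Icc (0:ℝ) 1))
    (F : ℝ) (hF : ∀ t ∈ Icc (0:ℝ) 1, |f t| ≤ F)
    (c : ℝ) (hcdef : p * c = -∫ s in (0:ℝ)..1, f s)
    (X X' X'' : ℝ → ℝ) (ε : ℝ) (hε : 0 < ε) (hε1 : ε ≤ 1) (hε2 : ε ^ 2 * p ≤ 1/2)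
    (hd1 : ∀ t ∈ Icc (0:ℝ) 1, HasDerivWithinAt X (X' t) (Icc (0:ℝ) 1) t)
    (hd2 : ∀ t ∈ Icc (0:ℝ) 1, HasDerivWithinAt X' (X'' t) (Icc (0:ℝ) 1) t)
    (hc1 : ContinuousOn X' (Icc (0:ℝ) 1))
    (hc2 : ContinuousOn X'' (Icc (0:ℝ) 1))
    (heq : ∀ t ∈ Icc (0:ℝ) 1, X'' t = ε ^ 2 * (p * X t + f t))
    (hb0 : X' 0 = 0) (hb1 : X' 1 = 0) :
    ∀ t ∈ Icc (0:ℝ) 1,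
      |X t - c| ≤ ε ^ 2 * (2 * p * (|c| + F) + F) := by
  have h01 : (0:ℝ) ≤ 1 := by norm_num
  have hXc : ContinuousOn X (Icc (0:ℝ) 1) := fun t ht => (hd1 t ht).continuousWithinAt
  have hfi : IntervalIntegrable f volume 0 1 := by
    apply ContinuousOn.intervalIntegrable; rwa [uIcc_of_le h01]
  have hXi : IntervalIntegrable X volume 0 1 := by
    apply ContinuousOn.intervalIntegrable; rwa [uIcc_of_le h01]
  have hF0 : 0 ≤ F := le_trans (abs_nonneg _) (hF 0 ⟨le_refl _, h01⟩)
  -- integral of X'' over [0,1] is 0 (Neumann)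
  have hint0 : ∫ s in (0:ℝ)..1, X'' s = 0 := by
    rw [ftc_icc X' X'' 0 1 le_rfl h01 le_rfl hc1 hd2 hc2, hb0, hb1, sub_zero]
  -- mean value of X is c
  have havg : ∫ s in (0:ℝ)..1, X s = c := by
    have h1 : ∫ s in (0:ℝ)..1, X'' s
        = ε ^ 2 * p * (∫ s in (0:ℝ)..1, X s) + ε ^ 2 * ∫ s in (0:ℝ)..1, f s := by
      rw [show (∫ s in (0:ℝ)..1, X'' s)
          = ∫ s in (0:ℝ)..1, (ε ^ 2 * p * X s + ε ^ 2 * f s) from ?_]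
      · rw [intervalIntegral.integral_add ((hXi.const_mul _)) (hfi.const_mul _),
          intervalIntegral.integral_const_mul, intervalIntegral.integral_const_mul]
      · apply intervalIntegral.integral_congr
        intro s hs
        rw [uIcc_of_le h01] at hs
        rw [heq s hs]; ring
    have h3 : ε ^ 2 * (p * (∫ s in (0:ℝ)..1, X s) + ∫ s in (0:ℝ)..1, f s) = 0 := by
      linear_combination hint0 - h1
    have hε2ne : (ε:ℝ) ^ 2 ≠ 0 := by positivity
    have h2 := (mul_eq_zero.mp h3).resolve_left hε2ne
    have hpne : p ≠ 0 := hp.ne'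
    have : p * (∫ s in (0:ℝ)..1, X s) = p * c := by rw [hcdef]; linarith
    exact mul_left_cancel₀ hpne this
  -- exists τ with X τ = c
  obtain ⟨τ, hτm, hτv⟩ : ∃ τ ∈ Icc (0:ℝ) 1, X τ = c := by
    by_contra hcon
    push_neg at hcon
    have hne : ∀ t ∈ Icc (0:ℝ) 1, X t - c ≠ 0 := fun t ht h =>
      hcon t ht (by linarith [sub_eq_zero.mp h])
    have hsign : (∀ t ∈ Icc (0:ℝ) 1, 0 < X t - c) ∨ (∀ t ∈ Icc (0:ℝ) 1, X t - c < 0) := by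
      by_contra hs
      push_neg at hs
      obtain ⟨⟨a, ha, ha'⟩, ⟨b, hb, hb'⟩⟩ := hs
      have ha'' : X a - c < 0 := lt_of_le_of_ne ha' (hne a ha)
      have hb'' : 0 < X b - c := lt_of_le_of_ne hb' (Ne.symm (hne b hb))
      have hcXc : ContinuousOn (fun t => X t - c) (uIcc a b) :=
        (hXc.sub continuousOn_const).mono (uIcc_subset_Icc ha hb)
      obtain ⟨z, hz, hz'⟩ := intermediate_value_uIcc hcXc
        (show (0:ℝ) ∈ uIcc (X a - c) (X b - c) by
          rw [mem_uIcc]; left; exact ⟨ha''.le, hb''.le⟩)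
      exact hne z (uIcc_subset_Icc ha hb hz) hz'
    have hiz : ∫ s in (0:ℝ)..1, (X s - c) = 0 := by
      rw [intervalIntegral.integral_sub hXi intervalIntegrable_const, havg]
      simp
    rcases hsign with h | h
    · have := intervalIntegral.intervalIntegral_pos_of_pos_on
        (hXi.sub intervalIntegrable_const)
        (fun s hs => h s ⟨hs.1.le, hs.2.le⟩) (by norm_num : (0:ℝ) < 1)
      linarith
    · have hpos := intervalIntegral.intervalIntegral_pos_of_pos_on
        (f := fun s => c - X s)
        ((_root_.intervalIntegrable_const).sub hXi)
        (fun s hs => by have := h s ⟨hs.1.le, hs.2.le⟩; linarith)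
        (by norm_num : (0:ℝ) < 1)
      have hneg : ∫ s in (0:ℝ)..1, (c - X s) = 0 := by
        rw [intervalIntegral.integral_sub intervalIntegrable_const hXi, havg]
        simp
      linarith
  -- maximum of |X|
  obtain ⟨t0, ht0, hmax⟩ := isCompact_Icc.exists_isMaxOn (nonempty_Icc.mpr h01)
    (continuous_abs.comp_continuousOn hXc)
  set M := |X t0| with hMdef
  have hM0 : 0 ≤ M := abs_nonneg _
  have hMb : ∀ t ∈ Icc (0:ℝ) 1, |X t| ≤ M := fun t ht => hmax ht
  set C := ε ^ 2 * (p * M + F) with hCdef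
  have hC0 : 0 ≤ C := by positivity
  -- bound on X''
  have hX2b : ∀ s ∈ Icc (0:ℝ) 1, |X'' s| ≤ C := by
    intro s hs
    rw [heq s hs, abs_mul, abs_of_nonneg (sq_nonneg ε), hCdef]
    have : |p * X s + f s| ≤ p * M + F := by
      calc |p * X s + f s| ≤ |p * X s| + |f s| := abs_add_le _ _
        _ = p * |X s| + |f s| := by rw [abs_mul, abs_of_pos hp]
        _ ≤ p * M + F := by
            have := hMb s hs
            have := hF s hs
            nlinarith
    nlinarith [sq_nonneg ε]
  -- bound on X'
  have hX1b : ∀ t ∈ Icc (0:ℝ) 1, |X' t| ≤ C := by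
    intro t ht
    have hftc : ∫ s in (0:ℝ)..t, X'' s = X' t - X' 0 :=
      ftc_icc X' X'' 0 t le_rfl ht.1 ht.2 hc1 hd2 hc2
    have hbd : |∫ s in (0:ℝ)..t, X'' s| ≤ C * |t - 0| := by
      rw [← Real.norm_eq_abs (∫ s in (0:ℝ)..t, X'' s)]
      apply intervalIntegral.norm_integral_le_of_norm_le_const
      intro s hs
      rw [Set.uIoc_of_le ht.1] at hs
      rw [Real.norm_eq_abs]
      exact hX2b s ⟨hs.1.le, hs.2.trans ht.2⟩
    rw [hftc, hb0, sub_zero] at hbd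
    calc |X' t| ≤ C * |t - 0| := hbd
      _ ≤ C * 1 := by
          apply mul_le_mul_of_nonneg_left _ hC0
          rw [sub_zero, abs_of_nonneg ht.1]; exact ht.2
      _ = C := mul_one C
  -- oscillation bound
  have hosc : ∀ t ∈ Icc (0:ℝ) 1, |X t - X τ| ≤ C := by
    intro t ht
    have hftc : ∫ s in τ..t, X' s = X t - X τ := by
      rcases le_total τ t with h | h
      · exact ftc_icc X X' τ t hτm.1 h ht.2 hXc hd1 hc1
      · rw [intervalIntegral.integral_symm, ftc_icc X X' t τ ht.1 h hτm.2 hXc hd1 hc1]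
        ring
    have hbd : |∫ s in τ..t, X' s| ≤ C * |t - τ| := by
      rw [← Real.norm_eq_abs (∫ s in τ..t, X' s)]
      apply intervalIntegral.norm_integral_le_of_norm_le_const
      intro s hs
      rw [Real.norm_eq_abs]
      rcases le_total τ t with h | h
      · rw [Set.uIoc_of_le h] at hs
        exact hX1b s ⟨hτm.1.trans hs.1.le, hs.2.trans ht.2⟩
      · rw [Set.uIoc_of_ge h] at hs
        exact hX1b s ⟨ht.1.trans hs.1.le, hs.2.trans hτm.2⟩
    rw [hftc] at hbd
    calc |X t - X τ| ≤ C * |t - τ| := hbd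
      _ ≤ C * 1 := by
          apply mul_le_mul_of_nonneg_left _ hC0
          rw [abs_sub_le_iff]
          constructor <;> [skip; skip] <;>
            · have h1 := ht.1; have h2 := ht.2; have h3 := hτm.1; have h4 := hτm.2
              linarith
      _ = C := mul_one C
  -- self-improving bound on M
  have hMle : M ≤ 2 * (|c| + F) := by
    have h1 : M ≤ |X t0 - X τ| + |X τ| := by
      calc M = |X t0| := rfl
        _ = |(X t0 - X τ) + X τ| := by ring_nf
        _ ≤ |X t0 - X τ| + |X τ| := abs_add_le _ _
    have h2 : M ≤ C + |c| := by rw [← hτv]; exact h1.trans (by linarith [hosc t0 ht0])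
    have hεsq : ε ^ 2 ≤ 1 := by nlinarith
    have h3 : ε ^ 2 * (p * M) ≤ (1/2) * M := by
      have := mul_le_mul_of_nonneg_right hε2 hM0
      nlinarith
    have h4 : ε ^ 2 * F ≤ F := by nlinarith
    rw [hCdef] at h2
    nlinarith
  -- conclusion
  intro t ht
  have h1 : |X t - c| ≤ C := by rw [← hτv]; exact hosc t ht
  have h2 : C ≤ ε ^ 2 * (2 * p * (|c| + F) + F) := by
    rw [hCdef]
    have : p * M ≤ 2 * p * (|c| + F) := by nlinarith
    nlinarith [sq_nonneg ε]
  exact h1.trans h2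

/-- if for each sufficiently small `ε > 0` the function `x^ε` is a
C² solution of `ẍ^ε = ε²(p·x^ε + f)` on `[0,1]` with Neumann boundary conditions
`ẋ^ε(0) = ẋ^ε(1) = 0`, then `x^ε` converges uniformly on `[0,1]` to the constant
`−(1/p)∫₀¹ f(s) ds` as `ε → 0⁺`. -/
theorem neumann_averaging_limit (p : ℝ) (hp : 0 < p)
    (f : ℝ → ℝ) (hf : ContinuousOn f (Set.Icc (0:ℝ) 1))
    (x x' x'' : ℝ → ℝ → ℝ) (ε₁ : ℝ) (hε₁ : 0 < ε₁)
    (hsol : ∀ ε ∈ Set.Ioc (0:ℝ) ε₁,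
      (∀ t ∈ Set.Icc (0:ℝ) 1, HasDerivWithinAt (x ε) (x' ε t) (Set.Icc (0:ℝ) 1) t) ∧
      (∀ t ∈ Set.Icc (0:ℝ) 1, HasDerivWithinAt (x' ε) (x'' ε t) (Set.Icc (0:ℝ) 1) t) ∧
      ContinuousOn (x' ε) (Set.Icc (0:ℝ) 1) ∧
      ContinuousOn (x'' ε) (Set.Icc (0:ℝ) 1) ∧
      (∀ t ∈ Set.Icc (0:ℝ) 1, x'' ε t = ε ^ 2 * (p * x ε t + f t)) ∧
      x' ε 0 = 0 ∧ x' ε 1 = 0) :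
    Tendsto
      (fun ε : ℝ => ⨆ t : Set.Icc (0:ℝ) 1,
        |x ε t + (1 / p) * ∫ s in (0:ℝ)..1, f s|)
      (nhdsWithin 0 (Set.Ioi 0)) (nhds 0) := by
  haveI : Nonempty (Set.Icc (0:ℝ) 1) := ⟨⟨0, by norm_num⟩⟩
  obtain ⟨F, hFb⟩ := isCompact_Icc.exists_bound_of_continuousOn hf
  have hFb' : ∀ t ∈ Set.Icc (0:ℝ) 1, |f t| ≤ F := by
    intro t ht; rw [← Real.norm_eq_abs]; exact hFb t ht
  set c : ℝ := -((1/p) * ∫ s in (0:ℝ)..1, f s) with hc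
  have hcdef : p * c = -∫ s in (0:ℝ)..1, f s := by
    rw [hc]; field_simp
  set K : ℝ := 2 * p * (|c| + F) + F with hK
  set δ : ℝ := min ε₁ (min 1 (1/(2*p))) with hδdef
  have hδ : 0 < δ := by
    apply lt_min hε₁
    apply lt_min one_pos
    positivity
  have hbound : ∀ ε ∈ Set.Ioc (0:ℝ) δ,
      (⨆ t : Set.Icc (0:ℝ) 1, |x ε t + (1/p) * ∫ s in (0:ℝ)..1, f s|) ≤ ε ^ 2 * K ∧
      0 ≤ ⨆ t : Set.Icc (0:ℝ) 1, |x ε t + (1/p) * ∫ s in (0:ℝ)..1, f s| := by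
    intro ε hε
    have hε0 : 0 < ε := hε.1
    have hεε₁ : ε ≤ ε₁ := hε.2.trans (min_le_left _ _)
    have hε1' : ε ≤ 1 := hε.2.trans ((min_le_right _ _).trans (min_le_left _ _))
    have hε2p : ε ≤ 1/(2*p) := hε.2.trans ((min_le_right _ _).trans (min_le_right _ _))
    have hε2 : ε ^ 2 * p ≤ 1/2 := by
      have h1 : ε ^ 2 ≤ ε := by nlinarith
      have h2 : ε * (2*p) ≤ 1 := by
        calc ε * (2*p) ≤ (1/(2*p)) * (2*p) :=
              mul_le_mul_of_nonneg_right hε2p (by positivity)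
          _ = 1 := by field_simp
      nlinarith
    obtain ⟨hd1, hd2, hc1, hc2, heq, hb0, hb1⟩ := hsol ε ⟨hε0, hεε₁⟩
    have hkey := key p hp f hf F hFb' c hcdef (x ε) (x' ε) (x'' ε) ε hε0 hε1' hε2
      hd1 hd2 hc1 hc2 heq hb0 hb1
    have hkey' : ∀ t : Set.Icc (0:ℝ) 1,
        |x ε t + (1/p) * ∫ s in (0:ℝ)..1, f s| ≤ ε ^ 2 * K := by
      intro t
      have := hkey t t.2
      rw [hc] at this
      rw [hK]
      calc |x ε t + (1/p) * ∫ s in (0:ℝ)..1, f s|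
          = |x ε t - -((1/p) * ∫ s in (0:ℝ)..1, f s)| := by ring_nf
        _ ≤ ε ^ 2 * (2 * p * (|c| + F) + F) := this
        _ = ε ^ 2 * (2 * p * (|c| + F) + F) := rfl
    have hbdd : BddAbove (Set.range fun t : Set.Icc (0:ℝ) 1 =>
        |x ε t + (1/p) * ∫ s in (0:ℝ)..1, f s|) := by
      refine ⟨ε ^ 2 * K, ?_⟩
      rintro a ⟨t, rfl⟩
      exact hkey' t
    constructor
    · exact ciSup_le hkey'
    · exact le_trans (abs_nonneg _) (le_ciSup hbdd ⟨0, by norm_num⟩)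
  have hmem : Set.Ioc (0:ℝ) δ ∈ nhdsWithin (0:ℝ) (Set.Ioi 0) :=
    Ioc_mem_nhdsGT_of_mem ⟨le_refl 0, hδ⟩
  apply squeeze_zero'
  · filter_upwards [hmem] with ε hε
    exact (hbound ε hε).2
  · filter_upwards [hmem] with ε hε
    exact (hbound ε hε).1
  · have : Tendsto (fun ε : ℝ => ε ^ 2 * K) (nhds 0) (nhds (0 ^ 2 * K)) := by
      exact (continuous_pow 2).continuousAt.mul continuousAt_const
    simpa using this.mono_left nhdsWithin_le_nhds
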